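/- ∫₀^∞ (1/x) ∫₀^x √(x/t) · | √(t/x)·1/(t+1) − (1/(2x)) log(1+x) |² dt dx = 2 − π²/6. -/

import Mathlib

open MeasureTheory Set Real Filter Topology intervalIntegral



/-- antiderivative of `u^n * (-log u)` -/
noncomputable def Phi (n : ℕ) (u : ℝ) : ℝ :=
  u ^ (n+1) / ((n:ℝ)+1)^2 - u ^ n * (u * Real.log u) / ((n:ℝ)+1)

lemma Phi_deriv (n : ℕ) {u : ℝ} (hu : 0 < u) :
    HasDerivAt (Phi n) (u ^ n * (-Real.log u)) u := by
  have hc : ((n:ℝ)+1) ≠ 0 := by positivity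
  have h1 : HasDerivAt (fun u : ℝ => u ^ (n+1)) (((n:ℝ)+1) * u ^ n) u := by
    simpa using hasDerivAt_pow (n+1) u
  have hlog : HasDerivAt Real.log u⁻¹ u := Real.hasDerivAt_log hu.ne'
  have h2 : HasDerivAt (fun u : ℝ => u ^ (n+1) * Real.log u)
      (((n:ℝ)+1) * u ^ n * Real.log u + u ^ (n+1) * u⁻¹) u := h1.mul hlog
  have h3 : HasDerivAt (fun u : ℝ => u ^ (n+1) / ((n:ℝ)+1)^2
        - u ^ (n+1) * Real.log u / ((n:ℝ)+1))
      ((((n:ℝ)+1) * u ^ n) / ((n:ℝ)+1)^2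
        - (((n:ℝ)+1) * u ^ n * Real.log u + u ^ (n+1) * u⁻¹) / ((n:ℝ)+1)) u :=
    (h1.div_const _).sub (h2.div_const _)
  have heq : (fun u : ℝ => u ^ (n+1) / ((n:ℝ)+1)^2
      - u ^ (n+1) * Real.log u / ((n:ℝ)+1)) = Phi n := by
    funext v; unfold Phi; ring
  rw [heq] at h3
  convert h3 using 1
  field_simp
  ring

lemma Phi_cont (n : ℕ) : Continuous (Phi n) := by
  unfold Phi
  fun_prop
lemma neg_log_le (u : ℝ) (h0 : 0 < u) (h1 : u ≤ 1) : -Real.log u ≤ 2 * u ^ (-(1/2) : ℝ) := by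
  have hs : (0:ℝ) < Real.sqrt u := Real.sqrt_pos.2 h0
  have h2 : -Real.log u = 2 * Real.log (Real.sqrt u)⁻¹ := by
    rw [Real.log_inv, Real.log_sqrt h0.le]; ring
  have h3 : Real.log (Real.sqrt u)⁻¹ ≤ (Real.sqrt u)⁻¹ - 1 :=
    Real.log_le_sub_one_of_pos (by positivity)
  have h4 : u ^ (-(1/2) : ℝ) = (Real.sqrt u)⁻¹ := by
    rw [Real.rpow_neg h0.le, ← Real.sqrt_eq_rpow]
  rw [h2, h4]
  nlinarith [hs, Real.sqrt_nonneg u]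

lemma pow_neg_log_integrable (n : ℕ) :
    IntegrableOn (fun u : ℝ => u ^ n * (-Real.log u)) (Ioo 0 1) := by
  have hdom : IntegrableOn (fun u : ℝ => 2 * u ^ (-(1/2) : ℝ)) (Ioo 0 1) := by
    have := (intervalIntegrable_rpow' (a := 0) (b := 1) (r := -(1/2)) (by norm_num))
    rw [intervalIntegrable_iff_integrableOn_Ioo_of_le zero_le_one] at this
    exact this.const_mul 2
  refine Integrable.mono' hdom ?_ ?_
  · exact ((measurable_id.pow_const n).mul Real.measurable_log.neg).aestronglyMeasurable
  · filter_upwards [ae_restrict_mem measurableSet_Ioo] with u hu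
    have h0 := hu.1; have h1 := hu.2
    have hl : 0 ≤ -Real.log u := by
      simpa using Real.log_nonpos h0.le h1.le
    have hp : u ^ n ≤ 1 := pow_le_one₀ h0.le h1.le
    have : |u ^ n * (-Real.log u)| = u ^ n * (-Real.log u) := by
      refine abs_of_nonneg (mul_nonneg (by positivity) hl)
    rw [Real.norm_eq_abs, this]
    calc u ^ n * (-Real.log u) ≤ 1 * (-Real.log u) := by
          exact mul_le_mul_of_nonneg_right hp hl
      _ = -Real.log u := one_mul _
      _ ≤ 2 * u ^ (-(1/2) : ℝ) := neg_log_le u h0 h1.le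





lemma pow_neg_log_integral (n : ℕ) :
    ∫ u in Ioo (0:ℝ) 1, u ^ n * (-Real.log u) = 1 / ((n:ℝ)+1)^2 := by
  have hab : (0:ℝ) ≤ 1 := zero_le_one
  have hInt : IntervalIntegrable (fun u : ℝ => u ^ n * (-Real.log u)) volume 0 1 := by
    rw [intervalIntegrable_iff_integrableOn_Ioo_of_le hab]
    exact pow_neg_log_integrable n
  have h := integral_eq_sub_of_hasDeriv_right_of_le hab ((Phi_cont n).continuousOn)
      (fun u hu => (Phi_deriv n hu.1).hasDerivWithinAt) hInt
  rw [intervalIntegral.integral_of_le hab, ← integral_Ioc_eq_integral_Ioo] at *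
  rw [h]
  unfold Phi
  norm_num




lemma hasSum_inv_sq : HasSum (fun n : ℕ => 1 / ((n:ℝ)+1)^2) (π ^ 2 / 6) := by
  have h : HasSum (fun n : ℕ => 1/((n:ℝ))^2) (π ^ 2/6) := hasSum_zeta_two
  have h2 := (hasSum_nat_add_iff' (f := fun n : ℕ => (1:ℝ)/(n:ℝ)^2) (g := π ^ 2/6) 1).2 h
  simp only [Finset.range_one, Finset.sum_singleton, Nat.cast_zero] at h2
  norm_num at h2
  convert (show HasSum (fun n : ℕ => (((n:ℝ)+1)^2)⁻¹) (π ^ 2 / 6) from h2) using 2 with n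
  push_cast; ring

lemma neg_log_div_integral :
    ∫ u in Ioo (0:ℝ) 1, (-Real.log u) / (1 - u) = π ^ 2 / 6 := by
  have hcong : ∀ u ∈ Ioo (0:ℝ) 1,
      (-Real.log u) / (1 - u) = ∑' n : ℕ, u ^ n * (-Real.log u) := by
    intro u hu
    rw [tsum_mul_right, tsum_geometric_of_lt_one hu.1.le hu.2]
    rw [div_eq_mul_inv, mul_comm]
  rw [setIntegral_congr_fun measurableSet_Ioo hcong]
  have hmeas : ∀ n : ℕ, AEStronglyMeasurable (fun u : ℝ => u ^ n * (-Real.log u))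
      (volume.restrict (Ioo (0:ℝ) 1)) :=
    fun n => ((measurable_id.pow_const n).mul Real.measurable_log.neg).aestronglyMeasurable
  have hlin : ∀ n : ℕ, ∫⁻ u in Ioo (0:ℝ) 1, ‖u ^ n * (-Real.log u)‖ₑ
      = ENNReal.ofReal (1 / ((n:ℝ)+1)^2) := by
    intro n
    have hnn : 0 ≤ᵐ[volume.restrict (Ioo (0:ℝ) 1)] fun u : ℝ => u ^ n * (-Real.log u) := by
      filter_upwards [ae_restrict_mem measurableSet_Ioo] with u hu
      have hl : 0 ≤ -Real.log u := by simpa using Real.log_nonpos hu.1.le hu.2.le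
      exact mul_nonneg (pow_nonneg hu.1.le n) hl
    have hOR := ofReal_integral_eq_lintegral_ofReal (pow_neg_log_integrable n) hnn
    have hcg : ∫⁻ u in Ioo (0:ℝ) 1, ‖u ^ n * (-Real.log u)‖ₑ
        = ∫⁻ u in Ioo (0:ℝ) 1, ENNReal.ofReal (u ^ n * (-Real.log u)) := by
      refine lintegral_congr_ae ?_
      filter_upwards [hnn] with u hu
      rw [← ofReal_norm_eq_enorm, Real.norm_eq_abs, abs_of_nonneg hu]
    rw [hcg, ← hOR, pow_neg_log_integral n]
  rw [MeasureTheory.integral_tsum hmeas ?_]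
  · rw [tsum_congr pow_neg_log_integral]
    exact hasSum_inv_sq.tsum_eq
  · rw [tsum_congr hlin,
      ← ENNReal.ofReal_tsum_of_nonneg (fun n => by positivity) hasSum_inv_sq.summable]
    exact ENNReal.ofReal_ne_top



lemma neg_log_div_integrable :
    IntegrableOn (fun u : ℝ => (-Real.log u) / (1 - u)) (Ioo 0 1) := by
  have hlog : IntegrableOn (fun u : ℝ => -Real.log u) (Ioo 0 1) := by
    simpa using pow_neg_log_integrable 0
  have hdom : IntegrableOn (fun u : ℝ => 2 + 2 * (-Real.log u)) (Ioo 0 1) := by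
    exact (integrable_const 2).add (hlog.const_mul 2)
  refine Integrable.mono' hdom ?_ ?_
  · exact (Real.measurable_log.neg.div (measurable_const.sub measurable_id)).aestronglyMeasurable
  · filter_upwards [ae_restrict_mem measurableSet_Ioo] with u hu
    have h0 := hu.1; have h1 := hu.2
    have hl : 0 ≤ -Real.log u := by simpa using Real.log_nonpos h0.le h1.le
    have h1u : 0 < 1 - u := by linarith
    rw [Real.norm_eq_abs, abs_of_nonneg (div_nonneg hl h1u.le)]
    rcases le_total u (1/2) with hc | hc
    · have : (1:ℝ)/2 ≤ 1 - u := by linarith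
      calc (-Real.log u) / (1 - u) ≤ (-Real.log u) / (1/2) :=
            div_le_div_of_nonneg_left hl (by norm_num) this
        _ = 2 * (-Real.log u) := by ring
        _ ≤ 2 + 2 * (-Real.log u) := by linarith
    · have hlu : -Real.log u ≤ (1 - u) / u := by
        have h := Real.log_le_sub_one_of_pos (x := u⁻¹) (by positivity)
        rw [Real.log_inv] at h
        have he : u⁻¹ - 1 = (1 - u) / u := by field_simp
        linarith [he ▸ h]
      calc (-Real.log u) / (1 - u) ≤ ((1 - u) / u) / (1 - u) := by gcongr
        _ = u⁻¹ := by field_simp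
        _ ≤ 2 := by
            rw [inv_le_comm₀ h0 (by norm_num)]
            linarith
        _ ≤ 2 + 2 * (-Real.log u) := by linarith




section Subst

noncomputable def hfun (x : ℝ) : ℝ := Real.log (1+x) / (x * (1+x))

lemma subst_deriv : ∀ u ∈ Ioo (0:ℝ) 1,
    HasDerivWithinAt (fun u : ℝ => u⁻¹ - 1) (-(u^2)⁻¹) (Ioo (0:ℝ) 1) u := by
  intro u hu
  exact ((hasDerivAt_inv hu.1.ne').sub_const 1).hasDerivWithinAt

lemma subst_inj : InjOn (fun u : ℝ => u⁻¹ - 1) (Ioo (0:ℝ) 1) := by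
  intro a ha b hb h
  simp only [sub_left_inj] at h
  exact inv_injective h

lemma subst_image : (fun u : ℝ => u⁻¹ - 1) '' (Ioo (0:ℝ) 1) = Ioi (0:ℝ) := by
  ext y
  constructor
  · rintro ⟨u, hu, rfl⟩
    have h1 : 1 < u⁻¹ := (one_lt_inv₀ hu.1).2 hu.2
    simpa using h1
  · intro hy
    have hy' : (0:ℝ) < y := hy
    refine ⟨(y+1)⁻¹, ⟨by positivity, ?_⟩, ?_⟩
    · rw [inv_lt_one₀ (by positivity)]
      linarith
    · show ((y+1)⁻¹)⁻¹ - 1 = y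
      rw [inv_inv]; ring

lemma subst_eq : ∀ u ∈ Ioo (0:ℝ) 1,
    |(-(u^2)⁻¹)| • hfun (u⁻¹ - 1) = (-Real.log u) / (1 - u) := by
  intro u hu
  have h0 := hu.1; have h1 := hu.2
  have hinv : (0:ℝ) < u⁻¹ - 1 := by
    have : 1 < u⁻¹ := (one_lt_inv₀ h0).2 h1
    linarith
  rw [abs_neg, abs_inv, abs_of_nonneg (by positivity : (0:ℝ) ≤ u^2)]
  unfold hfun
  rw [smul_eq_mul]
  have h1p : 1 + (u⁻¹ - 1) = u⁻¹ := by ring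
  rw [h1p, Real.log_inv]
  have hune : u ≠ 0 := h0.ne'
  have h1une : (1:ℝ) - u ≠ 0 := by intro hc; apply absurd h1; linarith [hc]
  field_simp

lemma hfun_integral : ∫ x in Ioi (0:ℝ), hfun x = π ^ 2 / 6 := by
  rw [← subst_image,
    integral_image_eq_integral_abs_deriv_smul measurableSet_Ioo subst_deriv subst_inj hfun,
    setIntegral_congr_fun measurableSet_Ioo subst_eq, neg_log_div_integral]

lemma hfun_integrable : IntegrableOn hfun (Ioi (0:ℝ)) := by
  rw [← subst_image,
    integrableOn_image_iff_integrableOn_abs_deriv_smul measurableSet_Ioo subst_deriv subst_inj]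
  exact (integrableOn_congr_fun subst_eq measurableSet_Ioo).2 neg_log_div_integrable

end Subst


-- K2 : ∫ t in Ioo 0 x, 1/(t+1) = log (1+x)
lemma K2 {x : ℝ} (hx : 0 < x) : ∫ t in Ioo (0:ℝ) x, 1/(t+1) = Real.log (1+x) := by
  rw [← integral_Ioc_eq_integral_Ioo, ← intervalIntegral.integral_of_le hx.le]
  have hderiv : ∀ t ∈ uIcc (0:ℝ) x, HasDerivAt (fun t : ℝ => Real.log (1+t)) (1/(t+1)) t := by
    intro t ht
    rw [uIcc_of_le hx.le] at ht
    have h1 : (0:ℝ) < 1 + t := by have := ht.1; linarith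
    have := ((hasDerivAt_id t).const_add 1).log h1.ne'
    simpa [add_comm] using this
  have hint : IntervalIntegrable (fun t : ℝ => 1/(t+1)) volume 0 x := by
    apply ContinuousOn.intervalIntegrable
    apply ContinuousOn.div continuousOn_const (by fun_prop)
    intro t ht
    rw [uIcc_of_le hx.le] at ht
    have := ht.1; intro hc; linarith [hc]
  rw [intervalIntegral.integral_eq_sub_of_hasDerivAt hderiv hint]
  norm_num

-- K3 : ∫ t in Ioo 0 x, (√t)⁻¹ = 2 √x
lemma K3 {x : ℝ} (hx : 0 < x) : ∫ t in Ioo (0:ℝ) x, (Real.sqrt t)⁻¹ = 2 * Real.sqrt x := by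
  rw [← integral_Ioc_eq_integral_Ioo, ← intervalIntegral.integral_of_le hx.le]
  have hcont : ContinuousOn (fun t : ℝ => 2 * Real.sqrt t) (Icc 0 x) := by fun_prop
  have hderiv : ∀ t ∈ Ioo (0:ℝ) x,
      HasDerivWithinAt (fun t : ℝ => 2 * Real.sqrt t) ((Real.sqrt t)⁻¹) (Ioi t) t := by
    intro t ht
    have hs : 0 < Real.sqrt t := Real.sqrt_pos.2 ht.1
    have := (Real.hasDerivAt_sqrt ht.1.ne').const_mul 2
    have h2 : 2 * (1 / (2 * Real.sqrt t)) = (Real.sqrt t)⁻¹ := by field_simp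
    rw [h2] at this
    exact this.hasDerivWithinAt
  have hint : IntervalIntegrable (fun t : ℝ => (Real.sqrt t)⁻¹) volume 0 x := by
    rw [intervalIntegrable_iff_integrableOn_Ioo_of_le hx.le]
    have hrp : IntegrableOn (fun t : ℝ => t ^ (-(1/2) : ℝ)) (Ioo 0 x) := by
      have := (intervalIntegrable_rpow' (a := 0) (b := x) (r := -(1/2)) (by norm_num))
      rwa [intervalIntegrable_iff_integrableOn_Ioo_of_le hx.le] at this
    refine (integrableOn_congr_fun ?_ measurableSet_Ioo).2 hrp
    intro t ht
    show (Real.sqrt t)⁻¹ = t ^ (-(1/2) : ℝ)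
    rw [Real.rpow_neg ht.1.le, ← Real.sqrt_eq_rpow]
  rw [integral_eq_sub_of_hasDeriv_right_of_le hx.le hcont hderiv hint]
  rw [Real.sqrt_zero]
  ring

-- K1 : ∫ t in Ioo 0 x, √t/(t+1)^2 = arctan √x - √x/(1+x)
lemma K1 {x : ℝ} (hx : 0 < x) :
    ∫ t in Ioo (0:ℝ) x, Real.sqrt t / (t+1)^2
      = Real.arctan (Real.sqrt x) - Real.sqrt x / (1+x) := by
  rw [← integral_Ioc_eq_integral_Ioo, ← intervalIntegral.integral_of_le hx.le]
  set F : ℝ → ℝ := fun t => Real.arctan (Real.sqrt t) - Real.sqrt t / (1+t) with hF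
  have hcont : ContinuousOn F (Icc 0 x) := by
    apply ContinuousOn.sub ((Real.continuous_arctan.comp Real.continuous_sqrt).continuousOn)
    apply ContinuousOn.div (by fun_prop) (by fun_prop)
    intro t ht
    have := ht.1; intro hc; linarith [hc]
  have hderiv : ∀ t ∈ Ioo (0:ℝ) x,
      HasDerivWithinAt F (Real.sqrt t / (t+1)^2) (Ioi t) t := by
    intro t ht
    have ht0 := ht.1
    have hs : 0 < Real.sqrt t := Real.sqrt_pos.2 ht0
    have hsq : Real.sqrt t ^ 2 = t := Real.sq_sqrt ht0.le
    have h1t : (0:ℝ) < 1 + t := by linarith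
    have hd1 : HasDerivAt (fun t : ℝ => Real.arctan (Real.sqrt t))
        (1 / (1 + t) * (1 / (2 * Real.sqrt t))) t := by
      have := (Real.hasDerivAt_arctan (Real.sqrt t)).comp t (Real.hasDerivAt_sqrt ht0.ne')
      simpa [hsq, Function.comp_def] using this
    have hd2 : HasDerivAt (fun t : ℝ => Real.sqrt t / (1+t))
        ((1 / (2 * Real.sqrt t) * (1+t) - Real.sqrt t * 1) / (1+t)^2) t := by
      exact (Real.hasDerivAt_sqrt ht0.ne').div (((hasDerivAt_id t).const_add 1)) h1t.ne'
    have := hd1.sub hd2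
    convert (show HasDerivWithinAt F _ (Ioi t) t from this.hasDerivWithinAt) using 1
    set s := Real.sqrt t with hs_def
    rw [← hsq]
    field_simp
    ring
  have hint : IntervalIntegrable (fun t : ℝ => Real.sqrt t / (t+1)^2) volume 0 x := by
    apply ContinuousOn.intervalIntegrable
    apply ContinuousOn.div (by fun_prop) (by fun_prop)
    intro t ht
    rw [uIcc_of_le hx.le] at ht
    have := ht.1; positivity
  rw [integral_eq_sub_of_hasDeriv_right_of_le hx.le hcont hderiv hint]
  simp [hF]



lemma sqrt_inv_integrable {x : ℝ} (hx : 0 < x) :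
    IntegrableOn (fun t : ℝ => (Real.sqrt t)⁻¹) (Ioo 0 x) := by
  have hrp : IntegrableOn (fun t : ℝ => t ^ (-(1/2) : ℝ)) (Ioo 0 x) := by
    have := (intervalIntegrable_rpow' (a := 0) (b := x) (r := -(1/2)) (by norm_num))
    rwa [intervalIntegrable_iff_integrableOn_Ioo_of_le hx.le] at this
  refine (integrableOn_congr_fun ?_ measurableSet_Ioo).2 hrp
  intro t ht
  show (Real.sqrt t)⁻¹ = t ^ (-(1/2) : ℝ)
  rw [Real.rpow_neg ht.1.le, ← Real.sqrt_eq_rpow]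

lemma inner_eq {x : ℝ} (hx : 0 < x) :
    (∫ t in Ioo (0:ℝ) x, Real.sqrt (x/t) *
        |Real.sqrt (t/x) * (1/(t+1)) - (1/(2*x)) * Real.log (1+x)| ^ (2:ℕ))
      = Real.arctan (Real.sqrt x) / Real.sqrt x - 1/(1+x)
        - Real.log (1+x) ^ 2 / (2*x) := by
  set L : ℝ := Real.log (1+x) with hL
  have hr : 0 < Real.sqrt x := Real.sqrt_pos.2 hx
  have hrsq : Real.sqrt x ^ 2 = x := Real.sq_sqrt hx.le
  have hcong : ∀ t ∈ Ioo (0:ℝ) x,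
      Real.sqrt (x/t) * |Real.sqrt (t/x) * (1/(t+1)) - (1/(2*x)) * L| ^ (2:ℕ)
      = (Real.sqrt x)⁻¹ * (Real.sqrt t / (t+1)^2) - (L/x) * (1/(t+1))
        + (L^2/(4*x^2) * Real.sqrt x) * (Real.sqrt t)⁻¹ := by
    intro t ht
    have ht0 := ht.1
    have hs : 0 < Real.sqrt t := Real.sqrt_pos.2 ht0
    have hssq : Real.sqrt t ^ 2 = t := Real.sq_sqrt ht0.le
    have h1t : (0:ℝ) < t + 1 := by linarith
    rw [sq_abs, Real.sqrt_div hx.le, Real.sqrt_div ht0.le]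
    set s := Real.sqrt t
    set r := Real.sqrt x
    rw [← hssq, ← hrsq]
    field_simp
    ring
  rw [setIntegral_congr_fun measurableSet_Ioo hcong]
  have i1 : IntegrableOn (fun t : ℝ => Real.sqrt t / (t+1)^2) (Ioo 0 x) := by
    refine (ContinuousOn.integrableOn_Icc ?_).mono_set Ioo_subset_Icc_self
    apply ContinuousOn.div (by fun_prop) (by fun_prop)
    intro t ht
    have := ht.1; positivity
  have i2 : IntegrableOn (fun t : ℝ => 1/(t+1)) (Ioo 0 x) := by
    refine (ContinuousOn.integrableOn_Icc ?_).mono_set Ioo_subset_Icc_self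
    apply ContinuousOn.div continuousOn_const (by fun_prop)
    intro t ht
    have := ht.1; intro hc; linarith [hc]
  have i3 := sqrt_inv_integrable hx
  have hI1 : IntegrableOn (fun t : ℝ => (Real.sqrt x)⁻¹ * (Real.sqrt t / (t+1)^2)) (Ioo 0 x) :=
    i1.const_mul _
  have hI2 : IntegrableOn (fun t : ℝ => (L/x) * (1/(t+1))) (Ioo 0 x) := i2.const_mul _
  have hI3 : IntegrableOn (fun t : ℝ => (L^2/(4*x^2) * Real.sqrt x) * (Real.sqrt t)⁻¹)
      (Ioo 0 x) := i3.const_mul _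
  have hI12 : IntegrableOn (fun t : ℝ => (Real.sqrt x)⁻¹ * (Real.sqrt t / (t+1)^2)
      - (L/x) * (1/(t+1))) (Ioo 0 x) := hI1.sub hI2
  rw [integral_add hI12 hI3, integral_sub hI1 hI2,
    MeasureTheory.integral_const_mul, MeasureTheory.integral_const_mul, MeasureTheory.integral_const_mul,
    K1 hx, K2 hx, K3 hx, ← hL]
  rw [← hrsq]
  set r := Real.sqrt x
  have : (1:ℝ) + r^2 > 0 := by positivity
  field_simp
  rw [Real.sqrt_sq hr.le]
  ring


lemma arctan_lower {u : ℝ} (hu : 0 ≤ u) : u / (1 + u^2) ≤ Real.arctan u := by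
  set F : ℝ → ℝ := fun y => Real.arctan y - y / (1 + y^2) with hF
  have hdF : ∀ y : ℝ, HasDerivAt F (2*y^2 / (1+y^2)^2) y := by
    intro y
    have h1 : (0:ℝ) < 1 + y^2 := by positivity
    have hden : HasDerivAt (fun y : ℝ => 1 + y^2) (2*y) y := by
      simpa using ((hasDerivAt_pow 2 y).const_add 1)
    have hd := (hasDerivAt_id y).div hden h1.ne'
    have h2 := (Real.hasDerivAt_arctan y).sub hd
    convert (show HasDerivAt F _ y from h2) using 1
    field_simp
    simp only [id_eq]
    ring
  have hmono : MonotoneOn F (Ici (0:ℝ)) := by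
    apply monotoneOn_of_deriv_nonneg (convex_Ici 0)
      (fun y _ => (hdF y).continuousAt.continuousWithinAt)
      (fun y _ => ((hdF y).differentiableAt).differentiableWithinAt)
    intro y hy
    rw [(hdF y).deriv]
    positivity
  have := hmono (self_mem_Ici) hu hu
  simp only [hF, Real.arctan_zero] at this ⊢
  norm_num at this
  linarith



noncomputable def G1 (x : ℝ) : ℝ :=
  Real.arctan (Real.sqrt x) / (x * Real.sqrt x) - 1 / (x * (1+x))

noncomputable def gg (x : ℝ) : ℝ :=
  if x = 0 then -2 else -2 * Real.arctan (Real.sqrt x) / Real.sqrt x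

lemma gg_deriv {x : ℝ} (hx : x ∈ Ioi (0:ℝ)) : HasDerivAt gg (G1 x) x := by
  have hx0 : 0 < x := hx
  have hr : 0 < Real.sqrt x := Real.sqrt_pos.2 hx0
  have hrsq : Real.sqrt x ^ 2 = x := Real.sq_sqrt hx0.le
  have hEq : (fun y => -2 * Real.arctan (Real.sqrt y) / Real.sqrt y) =ᶠ[nhds x] gg := by
    filter_upwards [eventually_ne_nhds hx0.ne'] with y hy
    simp [gg, hy]
  have hd1 : HasDerivAt (fun y : ℝ => Real.arctan (Real.sqrt y))
      (1 / (1 + x) * (1 / (2 * Real.sqrt x))) x := by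
    have := (Real.hasDerivAt_arctan (Real.sqrt x)).comp x (Real.hasDerivAt_sqrt hx0.ne')
    simpa [hrsq, Function.comp_def] using this
  have hd : HasDerivAt (fun y : ℝ => -2 * Real.arctan (Real.sqrt y) / Real.sqrt y)
      ((-2 * (1 / (1 + x) * (1 / (2 * Real.sqrt x))) * Real.sqrt x
        - (-2 * Real.arctan (Real.sqrt x)) * (1 / (2 * Real.sqrt x))) / (Real.sqrt x)^2) x := by
    exact ((hd1.const_mul (-2)).div (Real.hasDerivAt_sqrt hx0.ne') hr.ne')
  have hd' := hd.congr_of_eventuallyEq hEq.symm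
  convert (show HasDerivAt gg _ x from hd') using 1
  unfold G1
  set r := Real.sqrt x
  rw [← hrsq]
  field_simp
  ring

lemma tendsto_arctan_div : Tendsto (fun u : ℝ => Real.arctan u / u)
    (nhdsWithin 0 {(0:ℝ)}ᶜ) (nhds 1) := by
  have h : Tendsto (slope Real.arctan 0) (nhdsWithin 0 {(0:ℝ)}ᶜ) (nhds (1/(1+(0:ℝ)^2))) :=
    hasDerivAt_iff_tendsto_slope.1 (Real.hasDerivAt_arctan 0)
  norm_num at h
  refine h.congr fun u => ?_
  rw [slope_def_field]
  simp [div_eq_mul_inv]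

lemma sqrt_tendsto_ne : Tendsto Real.sqrt (nhdsWithin 0 (Ioi (0:ℝ))) (nhdsWithin 0 {(0:ℝ)}ᶜ) := by
  apply tendsto_nhdsWithin_of_tendsto_nhds_of_eventually_within
  · have : Tendsto Real.sqrt (nhds 0) (nhds (Real.sqrt 0)) := Real.continuous_sqrt.tendsto 0
    rw [Real.sqrt_zero] at this
    exact this.mono_left nhdsWithin_le_nhds
  · filter_upwards [self_mem_nhdsWithin] with x hx
    exact (Real.sqrt_pos.2 hx).ne'

lemma gg_cont : ContinuousWithinAt gg (Ici (0:ℝ)) 0 := by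
  rw [← Set.Ioi_insert, continuousWithinAt_insert_self]
  unfold ContinuousWithinAt
  have h2 := (tendsto_arctan_div.comp sqrt_tendsto_ne).const_mul (-2 : ℝ)
  have hgg0 : gg 0 = -2 := by simp [gg]
  rw [hgg0]
  rw [mul_one] at h2
  refine h2.congr' ?_
  filter_upwards [self_mem_nhdsWithin] with x hx
  have : x ≠ 0 := ne_of_gt hx
  simp [gg, this, Function.comp]
  ring

lemma sqrt_top : Tendsto Real.sqrt atTop atTop := by
  rw [tendsto_atTop_atTop]
  intro b
  refine ⟨(max b 0)^2, fun a ha => ?_⟩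
  have h0 : 0 ≤ max b 0 := le_max_right _ _
  calc b ≤ max b 0 := le_max_left _ _
    _ = Real.sqrt ((max b 0)^2) := (Real.sqrt_sq h0).symm
    _ ≤ Real.sqrt a := Real.sqrt_le_sqrt ha

lemma gg_top : Tendsto gg atTop (nhds 0) := by
  have hb : Tendsto (fun x : ℝ => π * (Real.sqrt x)⁻¹) atTop (nhds 0) := by
    have := (tendsto_inv_atTop_zero.comp sqrt_top).const_mul π
    simpa using this
  apply squeeze_zero_norm' _ hb
  filter_upwards [eventually_gt_atTop 0] with x hx
  have hr : 0 < Real.sqrt x := Real.sqrt_pos.2 hx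
  have harc : |Real.arctan (Real.sqrt x)| ≤ π/2 :=
    abs_le.2 ⟨(Real.neg_pi_div_two_lt_arctan _).le, (Real.arctan_lt_pi_div_two _).le⟩
  have : gg x = -2 * Real.arctan (Real.sqrt x) / Real.sqrt x := by simp [gg, hx.ne']
  rw [this, Real.norm_eq_abs, abs_div, abs_of_pos hr]
  rw [abs_mul, abs_neg, abs_two]
  rw [div_le_iff₀ hr] at *
  calc 2 * |Real.arctan (Real.sqrt x)| ≤ 2 * (π/2) := by linarith
    _ = π := by ring
    _ ≤ π * (Real.sqrt x)⁻¹ * Real.sqrt x := by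
        rw [mul_assoc, inv_mul_cancel₀ hr.ne', mul_one]

lemma G1_nonneg : ∀ x ∈ Ioi (0:ℝ), 0 ≤ G1 x := by
  intro x hx
  have hx0 : (0:ℝ) < x := hx
  have hr : 0 < Real.sqrt x := Real.sqrt_pos.2 hx0
  have hrsq : Real.sqrt x ^ 2 = x := Real.sq_sqrt hx0.le
  have hlow := arctan_lower (Real.sqrt_nonneg x)
  rw [hrsq] at hlow
  unfold G1
  rw [sub_nonneg, div_le_div_iff₀ (by positivity) (by positivity)]
  have h1 : Real.sqrt x ≤ Real.arctan (Real.sqrt x) * (1+x) := by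
    rw [div_le_iff₀ (by positivity : (0:ℝ) < 1 + x)] at hlow
    linarith
  nlinarith [h1, hx0, hr]

lemma G1_integral : ∫ x in Ioi (0:ℝ), G1 x = 2 := by
  have h := integral_Ioi_of_hasDerivAt_of_nonneg gg_cont (fun x hx => gg_deriv hx)
    G1_nonneg gg_top
  rw [h]
  simp [gg]

lemma G1_integrable : IntegrableOn G1 (Ioi (0:ℝ)) :=
  integrableOn_Ioi_deriv_of_nonneg gg_cont (fun x hx => gg_deriv hx) G1_nonneg gg_top


noncomputable def G2 (x : ℝ) : ℝ := Real.log (1+x) ^ 2 / (2 * x^2)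

noncomputable def psi (x : ℝ) : ℝ := -(Real.log (1+x) ^ 2 / (2 * x))

lemma psi_deriv {x : ℝ} (hx : x ∈ Ioi (0:ℝ)) : HasDerivAt psi (G2 x - hfun x) x := by
  have hx0 : (0:ℝ) < x := hx
  have h1x : (0:ℝ) < 1 + x := by linarith
  have hlog : HasDerivAt (fun y : ℝ => Real.log (1+y)) (1/(1+x)) x := by
    have := ((hasDerivAt_id x).const_add 1).log h1x.ne'
    simpa using this
  have hnum : HasDerivAt (fun y : ℝ => Real.log (1+y) ^ 2)
      (2 * Real.log (1+x) * (1/(1+x))) x := by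
    have := hlog.pow 2
    norm_num at this
    convert (show HasDerivAt (fun y : ℝ => Real.log (1+y) ^ 2) _ x from this) using 1
    ring
  have hden : HasDerivAt (fun y : ℝ => 2 * y) (2:ℝ) x := by
    simpa using (hasDerivAt_id x).const_mul (2:ℝ)
  have hd := (hnum.div hden (by positivity)).neg
  convert (show HasDerivAt psi _ x from hd) using 1
  unfold G2 hfun
  field_simp
  ring

lemma psi_cont : ContinuousWithinAt psi (Ici (0:ℝ)) 0 := by
  rw [← Set.Ioi_insert, continuousWithinAt_insert_self]
  unfold ContinuousWithinAt
  have hpsi0 : psi 0 = 0 := by simp [psi]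
  rw [hpsi0]
  have hslope : Tendsto (fun y : ℝ => Real.log (1+y) / y) (nhdsWithin 0 {(0:ℝ)}ᶜ)
      (nhds 1) := by
    have hd : HasDerivAt (fun y : ℝ => Real.log (1+y)) 1 0 := by
      have := ((hasDerivAt_id (0:ℝ)).const_add 1).log (by norm_num)
      norm_num at this
      exact this
    have h := hasDerivAt_iff_tendsto_slope.1 hd
    refine h.congr fun u => ?_
    rw [slope_def_field]
    norm_num
  have hlogt : Tendsto (fun y : ℝ => Real.log (1+y)) (nhdsWithin 0 (Ioi (0:ℝ))) (nhds 0) := by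
    have h1 : ContinuousAt (fun y : ℝ => 1 + y) 0 := by fun_prop
    have h2 : ContinuousAt Real.log ((fun y : ℝ => 1 + y) 0) := by
      apply Real.continuousAt_log; norm_num
    have hct := h2.comp h1
    have := hct.tendsto.mono_left (nhdsWithin_le_nhds (s := Ioi (0:ℝ)))
    simpa [Function.comp_def] using this
  have hsub : Tendsto (fun y : ℝ => y) (nhdsWithin 0 (Ioi (0:ℝ))) (nhdsWithin 0 {(0:ℝ)}ᶜ) := by
    apply tendsto_nhdsWithin_of_tendsto_nhds_of_eventually_within
    · exact tendsto_id.mono_left nhdsWithin_le_nhds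
    · filter_upwards [self_mem_nhdsWithin] with y hy
      exact ne_of_gt hy
  have := ((hslope.comp hsub).mul hlogt).neg.div_const 2
  norm_num at this
  refine this.congr fun y => ?_
  unfold psi
  ring

lemma psi_top : Tendsto psi atTop (nhds 0) := by
  have h := Real.tendsto_pow_log_div_mul_add_atTop 2 (-2) 2 (by norm_num)
  have hcomp : Tendsto (fun x : ℝ => 1 + x) atTop atTop := tendsto_atTop_add_const_left _ _ tendsto_id
  have h2 := (h.comp hcomp).neg
  norm_num at h2
  refine h2.congr fun x => ?_
  unfold psi
  show -(Real.log (1+x) ^ 2 / (2*(1+x) + (-2))) = -(Real.log (1+x) ^ 2 / (2*x))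
  have he : 2*(1+x) + (-2) = 2*x := by ring
  rw [he]


lemma G2_meas : AEStronglyMeasurable G2 (volume.restrict (Ioi (0:ℝ))) := by
  apply Measurable.aestronglyMeasurable
  unfold G2
  exact ((Real.measurable_log.comp (measurable_const.add measurable_id)).pow_const 2).div
    ((measurable_id.pow_const 2).const_mul 2)

lemma G2_integrable : IntegrableOn G2 (Ioi (0:ℝ)) := by
  have h1 : IntegrableOn G2 (Ioc (0:ℝ) 1) := by
    refine Integrable.mono' (integrable_const (1/2 : ℝ))
      (G2_meas.mono_measure (Measure.restrict_mono Ioc_subset_Ioi_self le_rfl)) ?_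
    filter_upwards [ae_restrict_mem measurableSet_Ioc] with x hx
    have hx0 := hx.1
    have hl0 : 0 ≤ Real.log (1+x) := Real.log_nonneg (by linarith)
    have hl : Real.log (1+x) ≤ x := by
      have := Real.log_le_sub_one_of_pos (x := 1+x) (by linarith)
      linarith
    rw [Real.norm_eq_abs, abs_of_nonneg (by unfold G2; positivity)]
    unfold G2
    rw [div_le_iff₀ (by positivity)]
    nlinarith [hl, hl0, hx0]
  have h2 : IntegrableOn G2 (Ioi (1:ℝ)) := by
    have hdom : IntegrableOn (fun x : ℝ => 13 * x ^ (-(3/2) : ℝ)) (Ioi (1:ℝ)) :=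
      (integrableOn_Ioi_rpow_of_lt (by norm_num) one_pos).const_mul 13
    refine Integrable.mono' hdom
      (G2_meas.mono_measure (Measure.restrict_mono (Ioi_subset_Ioi zero_le_one) le_rfl)) ?_
    filter_upwards [ae_restrict_mem measurableSet_Ioi] with x hx
    have hx1 : (1:ℝ) < x := hx
    have hx0 : (0:ℝ) < x := by linarith
    have hl0 : 0 ≤ Real.log (1+x) := Real.log_nonneg (by linarith)
    -- log (1+x) ≤ 5 * x^(1/4)
    have key : Real.log (1+x) ≤ 5 * x ^ ((1:ℝ)/4) := by
      have h1x : (0:ℝ) < 1 + x := by linarith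
      have e1 : Real.log (1+x) = 4 * Real.log ((1+x) ^ ((1:ℝ)/4)) := by
        rw [Real.log_rpow h1x]; ring
      have e2 : Real.log ((1+x) ^ ((1:ℝ)/4)) ≤ (1+x) ^ ((1:ℝ)/4) := by
        have := Real.log_le_sub_one_of_pos (x := (1+x) ^ ((1:ℝ)/4)) (by positivity)
        linarith
      have e3 : (1+x) ^ ((1:ℝ)/4) ≤ (2*x) ^ ((1:ℝ)/4) := by
        apply Real.rpow_le_rpow (by linarith) (by linarith) (by norm_num)
      have e4 : (2*x) ^ ((1:ℝ)/4) ≤ (5/4 : ℝ) * x ^ ((1:ℝ)/4) := by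
        have h54 : ((5/4 : ℝ))^(4:ℕ) = 625/256 := by norm_num
        have e5 : (2*x) ^ ((1:ℝ)/4) ≤ ((625/256 : ℝ) * x) ^ ((1:ℝ)/4) := by
          apply Real.rpow_le_rpow (by positivity) (by nlinarith) (by norm_num)
        have e6 : ((625/256 : ℝ) * x) ^ ((1:ℝ)/4) = (5/4 : ℝ) * x ^ ((1:ℝ)/4) := by
          rw [Real.mul_rpow (by norm_num) hx0.le]
          congr 1
          rw [show (625/256 : ℝ) = (5/4 : ℝ)^(4:ℕ) by norm_num, ← Real.rpow_natCast ((5/4:ℝ)) 4,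
            ← Real.rpow_mul (by norm_num)]
          norm_num
        rw [e6] at e5; exact e5
      calc Real.log (1+x) = 4 * Real.log ((1+x) ^ ((1:ℝ)/4)) := e1
        _ ≤ 4 * ((2*x) ^ ((1:ℝ)/4)) := by linarith [e2.trans e3]
        _ ≤ 4 * ((5/4 : ℝ) * x ^ ((1:ℝ)/4)) := by linarith [e4]
        _ = 5 * x ^ ((1:ℝ)/4) := by ring
    rw [Real.norm_eq_abs, abs_of_nonneg (by unfold G2; positivity)]
    unfold G2
    have hsq : Real.log (1+x) ^ 2 ≤ 25 * x ^ ((1:ℝ)/2) := by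
      have h5 : (5 * x ^ ((1:ℝ)/4))^2 = 25 * x ^ ((1:ℝ)/2) := by
        rw [mul_pow, ← Real.rpow_natCast (x ^ ((1:ℝ)/4)) 2, ← Real.rpow_mul hx0.le]
        norm_num
      calc Real.log (1+x)^2 ≤ (5 * x ^ ((1:ℝ)/4))^2 := by
            apply sq_le_sq' (by nlinarith [Real.rpow_nonneg hx0.le ((1:ℝ)/4)]) key
        _ = 25 * x ^ ((1:ℝ)/2) := h5
    rw [div_le_iff₀ (by positivity)]
    have hxr : x ^ (-(3/2) : ℝ) * (2 * x^2) = 2 * x ^ ((1:ℝ)/2) := by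
      calc x ^ (-(3/2) : ℝ) * (2 * x^2)
          = 2 * (x ^ (-(3/2) : ℝ) * x ^ ((2:ℕ):ℝ)) := by rw [← Real.rpow_natCast x 2]; ring
        _ = 2 * x ^ ((1:ℝ)/2) := by rw [← Real.rpow_add hx0]; norm_num
    calc Real.log (1+x)^2 ≤ 25 * x ^ ((1:ℝ)/2) := hsq
      _ ≤ 13 * (2 * x ^ ((1:ℝ)/2)) := by
          have := Real.rpow_nonneg hx0.le ((1:ℝ)/2); linarith
      _ = 13 * (x ^ (-(3/2) : ℝ) * (2 * x^2)) := by rw [hxr]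
      _ = 13 * x ^ (-(3/2) : ℝ) * (2 * x^2) := by ring
  have : Ioi (0:ℝ) = Ioc (0:ℝ) 1 ∪ Ioi (1:ℝ) := (Ioc_union_Ioi_eq_Ioi zero_le_one).symm
  rw [this]
  exact h1.union h2

lemma G2_integral : ∫ x in Ioi (0:ℝ), G2 x = π ^ 2 / 6 := by
  have hdiff : IntegrableOn (fun x : ℝ => G2 x - hfun x) (Ioi (0:ℝ)) :=
    G2_integrable.sub hfun_integrable
  have h0 := integral_Ioi_of_hasDerivAt_of_tendsto psi_cont
    (fun x hx => psi_deriv hx) hdiff psi_top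
  rw [integral_sub G2_integrable hfun_integrable, hfun_integral] at h0
  have hpsi0 : psi 0 = 0 := by simp [psi]
  rw [hpsi0] at h0
  linarith

theorem example_refinement_term :
    ∫ x in Ioi (0:ℝ), (1/x) * ∫ t in Ioo (0:ℝ) x,
        Real.sqrt (x/t) *
          |Real.sqrt (t/x) * (1/(t+1)) - (1/(2*x)) * Real.log (1+x)| ^ (2:ℕ)
      = 2 - π ^ 2 / 6 := by
  have hcong : ∀ x ∈ Ioi (0:ℝ),
      (1/x) * (∫ t in Ioo (0:ℝ) x, Real.sqrt (x/t) *
          |Real.sqrt (t/x) * (1/(t+1)) - (1/(2*x)) * Real.log (1+x)| ^ (2:ℕ))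
        = G1 x - G2 x := by
    intro x hx
    have hx0 : (0:ℝ) < x := hx
    rw [inner_eq hx0]
    have hr : 0 < Real.sqrt x := Real.sqrt_pos.2 hx0
    have hrsq : Real.sqrt x ^ 2 = x := Real.sq_sqrt hx0.le
    unfold G1 G2
    rw [← hrsq]
    have h1r : (0:ℝ) < 1 + Real.sqrt x ^ 2 := by positivity
    field_simp
  rw [setIntegral_congr_fun measurableSet_Ioi hcong,
    integral_sub G1_integrable G2_integrable, G1_integral, G2_integral]
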